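/- Let $G$ be a finite graph and $p \in [0,1]$. Let $X_p$ be the random induced subgraph of $G$ obtained by independently keeping each vertex with probability $p$ (Bernoulli) and deleting all resulting isolated vertices, and let $M_p$ be obtained by independently taking $\mathrm{Po}(p)$ copies of each vertex, adding induced edges, and deleting isolated vertices. Then there exists a coupling of $X_p$ and $M_p$ such that $\mathbb{P}(M_p \neq X_p \mid X_p) \le 2p\, v(X_p)$, where $v(X_p)$ is the number of vertices of $X_p$. -/

import Mathlib

set_option maxHeartbeats 1000000

open MeasureTheory Set
open scoped Classical ENNReal

/-- The blow-up of a graph `G` along a multiplicity function `n : V → ℕ`: each vertex `i` is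
replaced by `n i` copies, and copies are adjacent iff the original vertices are. -/
def blowup {V : Type*} (G : SimpleGraph V) (n : V → ℕ) : SimpleGraph (Σ i : V, Fin (n i)) :=
  SimpleGraph.comap (fun a => a.1) G

/-- Delete isolated vertices: set the multiplicity of a vertex to `0` unless it is present and
has a present neighbour (so that its copies are non-isolated in the blow-up). -/
noncomputable def delIso {V : Type*} (G : SimpleGraph V) (n : V → ℕ) : V → ℕ :=
  fun i => if 0 < n i ∧ ∃ j, G.Adj i j ∧ 0 < n j then n i else 0

noncomputable def cf (p : ℝ) (x : ℕ × ℕ) : ℝ≥0∞ :=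
  if x = (0, 0) then ENNReal.ofReal (1 - p)
  else if x = (1, 0) then ENNReal.ofReal (Real.exp (-p) - (1 - p))
  else if x.1 = 1 then ENNReal.ofReal (p ^ x.2 * Real.exp (-p) / x.2.factorial)
  else 0

lemma cf_zero {p : ℝ} {x : ℕ × ℕ} (h0 : x ≠ (0, 0)) (h1 : x.1 ≠ 1) : cf p x = 0 := by
  rw [cf, if_neg h0, if_neg (fun h => h1 (by rw [h])), if_neg h1]

lemma cf_one_succ {p : ℝ} (b : ℕ) :
    cf p (1, b + 1) = ENNReal.ofReal (p ^ (b+1) * Real.exp (-p) / (b+1).factorial) := by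
  simp [cf]

section
variable {p : ℝ}

lemma q_hasSum (hp0 : 0 ≤ p) : HasSum (fun n => p ^ n * Real.exp (-p) / n.factorial) 1 := by
  have h := ProbabilityTheory.poissonPMFRealSum p.toNNReal
  simp only [ProbabilityTheory.poissonPMFReal, Real.coe_toNNReal p hp0] at h
  convert h using 2 with n
  ring

lemma exp_sub_nonneg : 0 ≤ Real.exp (-p) - (1 - p) := by
  have := Real.add_one_le_exp (-p)
  linarith

lemma one_sub_exp_nonneg (hp0 : 0 ≤ p) : 0 ≤ 1 - Real.exp (-p) := by
  have : Real.exp (-p) ≤ 1 := Real.exp_le_one_iff.2 (by linarith)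
  linarith

lemma q_nonneg (hp0 : 0 ≤ p) (n : ℕ) : 0 ≤ p ^ n * Real.exp (-p) / n.factorial := by
  positivity

lemma q_tail (hp0 : 0 ≤ p) :
    ∑' n : ℕ, (p ^ (n+1) * Real.exp (-p) / (n+1).factorial) = 1 - Real.exp (-p) := by
  have hq := q_hasSum (p := p) hp0
  have hs : Summable (fun n => p ^ n * Real.exp (-p) / n.factorial) := hq.summable
  have h0 := Summable.tsum_eq_zero_add hs
  rw [hq.tsum_eq] at h0
  simp only [pow_zero, Nat.factorial_zero, Nat.cast_one, one_mul, div_one] at h0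
  linarith [h0]

lemma cf_tsum (hp0 : 0 ≤ p) (hp1 : p ≤ 1) : ∑' x : ℕ × ℕ, cf p x = 1 := by
  have hsplit : ∑' x : ℕ × ℕ, cf p x = ∑' a : ℕ, ∑' b : ℕ, cf p (a, b) := by
    rw [← ENNReal.tsum_prod]
  rw [hsplit]
  have hF0 : ∑' b : ℕ, cf p (0, b) = ENNReal.ofReal (1 - p) := by
    rw [tsum_eq_single 0 (fun b hb => cf_zero (by simp [Prod.ext_iff, hb]) (by simp))]
    simp [cf]
  have htail : ∑' b : ℕ, cf p (1, b + 1) = ENNReal.ofReal (1 - Real.exp (-p)) := by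
    simp_rw [cf_one_succ]
    have hs : Summable (fun n : ℕ => p ^ (n+1) * Real.exp (-p) / (n+1).factorial) :=
      (summable_nat_add_iff (f := fun n : ℕ => p ^ n * Real.exp (-p) / n.factorial) 1).2
        (q_hasSum hp0).summable
    rw [← ENNReal.ofReal_tsum_of_nonneg (fun n => q_nonneg hp0 _) hs, q_tail hp0]
  have hF1 : ∑' b : ℕ, cf p (1, b) =
      ENNReal.ofReal (Real.exp (-p) - (1 - p)) + ENNReal.ofReal (1 - Real.exp (-p)) := by
    rw [tsum_eq_zero_add' (f := fun b : ℕ => cf p (1, b)) ENNReal.summable, htail]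
    congr 1
  rw [tsum_eq_sum (s := {0, 1}) (by
    intro b hb
    have h0 : b ≠ 0 := by intro h; simp [h] at hb
    have h1 : b ≠ 1 := by intro h; simp [h] at hb
    exact ENNReal.summable.tsum_eq_zero_iff.2 fun c =>
      cf_zero (by simp [Prod.ext_iff, h0]) (by simpa using h1))]
  rw [Finset.sum_insert (by simp), Finset.sum_singleton, hF0, hF1,
    ← ENNReal.ofReal_add (exp_sub_nonneg) (one_sub_exp_nonneg hp0),
    ← ENNReal.ofReal_add (by linarith)
      (by linarith [exp_sub_nonneg (p:=p), one_sub_exp_nonneg (p:=p) hp0])]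
  norm_num
end

section
variable {p : ℝ}

/-- The coupled Bernoulli–Poisson distribution on `ℕ × ℕ`. -/
noncomputable def nuM (p : ℝ) (hp0 : 0 ≤ p) (hp1 : p ≤ 1) : Measure (ℕ × ℕ) :=
  PMF.toMeasure ⟨cf p, (Summable.hasSum_iff ENNReal.summable).2 (cf_tsum hp0 hp1)⟩

instance (hp0 : 0 ≤ p) (hp1 : p ≤ 1) : IsProbabilityMeasure (nuM p hp0 hp1) :=
  PMF.toMeasure.isProbabilityMeasure _

variable (hp0 : 0 ≤ p) (hp1 : p ≤ 1)

lemma nuM_apply (s : Set (ℕ × ℕ)) : nuM p hp0 hp1 s = ∑' x, s.indicator (cf p) x :=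
  PMF.toMeasure_apply _ (s.to_countable.measurableSet)

lemma nuM_apply_single (s : Set (ℕ × ℕ)) (a : ℕ × ℕ)
    (h : ∀ b, b ≠ a → s.indicator (cf p) b = 0) :
    nuM p hp0 hp1 s = s.indicator (cf p) a := by
  rw [nuM_apply, tsum_eq_single a h]

lemma nuM_fst_ne_one : nuM p hp0 hp1 {x | x.1 ≠ 1} = ENNReal.ofReal (1 - p) := by
  rw [nuM_apply_single hp0 hp1 _ (0, 0) (fun b hb => by
    rw [Set.indicator_apply]
    split_ifs with hbs
    · exact cf_zero hb hbs
    · rfl)]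
  rw [Set.indicator_apply, if_pos (by simp)]
  simp [cf]

lemma nuM_fst_one : nuM p hp0 hp1 {x | x.1 = 1} = ENNReal.ofReal p := by
  have hc : {x : ℕ × ℕ | x.1 = 1} = {x : ℕ × ℕ | x.1 ≠ 1}ᶜ := by
    ext x; simp
  rw [hc, measure_compl (Set.to_countable _).measurableSet (measure_ne_top _ _),
    nuM_fst_ne_one hp0 hp1, measure_univ,
    show (1 : ℝ≥0∞) = ENNReal.ofReal 1 from (ENNReal.ofReal_one).symm,
    ← ENNReal.ofReal_sub _ (by linarith)]
  norm_num

lemma nuM_fst_zero : nuM p hp0 hp1 {x | x.1 = 0} = ENNReal.ofReal (1 - p) := by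
  rw [nuM_apply_single hp0 hp1 _ (0, 0) (fun b hb => by
    rw [Set.indicator_apply]
    split_ifs with hbs
    · exact cf_zero hb (by rw [Set.mem_setOf_eq] at hbs; omega)
    · rfl)]
  rw [Set.indicator_apply, if_pos (by simp)]
  simp [cf]

lemma nuM_bad : nuM p hp0 hp1 {x | x.1 = 0 ∧ x.2 ≠ 0} = 0 := by
  rw [nuM_apply, ENNReal.summable.tsum_eq_zero_iff]
  intro b
  rw [Set.indicator_apply]
  split_ifs with hb
  · exact cf_zero (by rintro rfl; exact hb.2 rfl) (by rw [Set.mem_setOf_eq] at hb; omega)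
  · rfl

lemma nuM_snd (k : ℕ) :
    nuM p hp0 hp1 {x | x.2 = k}
      = ENNReal.ofReal (p ^ k * Real.exp (-p) / (k.factorial : ℝ)) := by
  cases k with
  | zero =>
    rw [nuM_apply, tsum_eq_sum (s := {((0 : ℕ), (0 : ℕ)), ((1 : ℕ), (0 : ℕ))} ) (by
      intro b hb
      rw [Set.indicator_apply]
      split_ifs with hbs
      · simp only [Finset.mem_insert, Finset.mem_singleton] at hb
        push_neg at hb
        rw [Set.mem_setOf_eq] at hbs
        refine cf_zero hb.1 (fun h => hb.2 ?_)
        have hbe : b = (b.1, b.2) := rfl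
        rw [hbe, h, hbs]
      · rfl)]
    rw [Finset.sum_insert (by decide), Finset.sum_singleton,
      Set.indicator_apply, if_pos (by simp), Set.indicator_apply, if_pos (by simp)]
    have h1 : cf p (0, 0) = ENNReal.ofReal (1 - p) := by simp [cf]
    have h2 : cf p (1, 0) = ENNReal.ofReal (Real.exp (-p) - (1 - p)) := by simp [cf]
    rw [h1, h2, ← ENNReal.ofReal_add (by linarith) exp_sub_nonneg]
    norm_num
  | succ k =>
    rw [nuM_apply_single hp0 hp1 _ (1, k + 1) (fun b hb => by
      rw [Set.indicator_apply]
      split_ifs with hbs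
      · rw [Set.mem_setOf_eq] at hbs
        refine cf_zero (fun h => by simp [h] at hbs) (fun h => hb ?_)
        have hbe : b = (b.1, b.2) := rfl
        rw [hbe, h, hbs]
      · rfl)]
    rw [Set.indicator_apply, if_pos (by simp), cf_one_succ]

lemma nuM_fst_big (c : ℕ) (hc : 2 ≤ c) : nuM p hp0 hp1 {x | x.1 = c} = 0 := by
  rw [nuM_apply, ENNReal.summable.tsum_eq_zero_iff]
  intro b
  rw [Set.indicator_apply]
  split_ifs with hb
  · rw [Set.mem_setOf_eq] at hb
    exact cf_zero (by rintro rfl; simp at hb; omega) (by omega)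
  · rfl

lemma nuM_one_one : nuM p hp0 hp1 {((1:ℕ), (1:ℕ))} = ENNReal.ofReal (p * Real.exp (-p)) := by
  rw [nuM_apply_single hp0 hp1 _ (1, 1) (fun b hb => by
    rw [Set.indicator_apply]
    split_ifs with hbs
    · exact absurd hbs hb
    · rfl)]
  rw [Set.indicator_apply, if_pos (Set.mem_singleton _), cf_one_succ]
  norm_num

lemma nuM_ne (c : ℕ) (hc : 1 ≤ c) :
    nuM p hp0 hp1 {x | x.1 = c ∧ x.2 ≠ c}
      ≤ ENNReal.ofReal p * nuM p hp0 hp1 {x | x.1 = c} := by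
  rcases Nat.lt_or_ge c 2 with h2 | h2
  · have hc1 : c = 1 := by omega
    subst hc1
    have hdiff : {x : ℕ × ℕ | x.1 = 1 ∧ x.2 ≠ 1} = {x : ℕ × ℕ | x.1 = 1} \ {((1:ℕ), (1:ℕ))} := by
      ext ⟨a, b⟩
      simp [Prod.ext_iff, and_comm]
      tauto
    rw [hdiff, measure_diff (by rintro x hx; simp at hx; simp [hx])
      ((Set.to_countable _).measurableSet.nullMeasurableSet) (measure_ne_top _ _),
      nuM_fst_one hp0 hp1, nuM_one_one hp0 hp1,
      ← ENNReal.ofReal_sub _ (by positivity)]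
    calc ENNReal.ofReal (p - p * Real.exp (-p)) ≤ ENNReal.ofReal (p * p) := by
          apply ENNReal.ofReal_le_ofReal
          have h1 : 1 - Real.exp (-p) ≤ p := by
            have := Real.add_one_le_exp (-p); linarith
          calc p - p * Real.exp (-p) = p * (1 - Real.exp (-p)) := by ring
          _ ≤ p * p := mul_le_mul_of_nonneg_left h1 hp0
      _ = ENNReal.ofReal p * ENNReal.ofReal p := ENNReal.ofReal_mul hp0
  · have h0 : nuM p hp0 hp1 {x | x.1 = c} = 0 := nuM_fst_big hp0 hp1 c h2
    have hle : nuM p hp0 hp1 {x | x.1 = c ∧ x.2 ≠ c} ≤ nuM p hp0 hp1 {x | x.1 = c} :=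
      measure_mono (fun x hx => hx.1)
    simpa [h0] using hle

end

lemma delIso_cases {V : Type*} (G : SimpleGraph V) (a : V → ℕ) (i : V) :
    delIso G a i = a i ∨ delIso G a i = 0 := by
  unfold delIso; split_ifs <;> simp

lemma delIso_pos {V : Type*} (G : SimpleGraph V) (a : V → ℕ) (i : V)
    (hi : 0 < delIso G a i) :
    (0 < a i ∧ ∃ j, G.Adj i j ∧ 0 < a j) ∧ delIso G a i = a i := by
  by_cases h : 0 < a i ∧ ∃ j, G.Adj i j ∧ 0 < a j
  · exact ⟨h, by unfold delIso; rw [if_pos h]⟩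
  · exfalso; unfold delIso at hi; rw [if_neg h] at hi; exact lt_irrefl _ hi

lemma delIso_congr {V : Type*} (G : SimpleGraph V) (a b : V → ℕ)
    (h0 : ∀ i, a i = 0 → b i = 0)
    (h1 : ∀ i, 0 < delIso G a i → b i = a i) :
    delIso G b = delIso G a := by
  funext i
  by_cases hi : 0 < delIso G a i
  · obtain ⟨⟨hai, j, hadj, haj⟩, hdai⟩ := delIso_pos G a i hi
    have hbi : b i = a i := h1 i hi
    have hdj : 0 < delIso G a j := by
      have hcond : 0 < a j ∧ ∃ k, G.Adj j k ∧ 0 < a k := ⟨haj, i, hadj.symm, hai⟩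
      unfold delIso; rw [if_pos hcond]; exact haj
    have hbj : b j = a j := h1 j hdj
    have hdb : delIso G b i = b i := by
      unfold delIso; rw [if_pos ⟨by omega, j, hadj, by omega⟩]
    omega
  · have hdai : delIso G a i = 0 := by omega
    rw [hdai]
    unfold delIso
    split_ifs with hc
    · exfalso
      obtain ⟨hbi, j, hadj, hbj⟩ := hc
      have hai : 0 < a i := Nat.pos_of_ne_zero fun h => by rw [h0 i h] at hbi; exact lt_irrefl _ hbi
      have haj : 0 < a j := Nat.pos_of_ne_zero fun h => by rw [h0 j h] at hbj; exact lt_irrefl _ hbj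
      have : delIso G a i = a i := by unfold delIso; rw [if_pos ⟨hai, j, hadj, haj⟩]
      omega
    · rfl

lemma pi_cylinder {n : ℕ} (ν : Measure (ℕ × ℕ)) [IsProbabilityMeasure ν]
    {V : Type*} [Fintype V] (e : V ≃ Fin n) (S : Finset V) (B : V → Set (ℕ × ℕ)) :
    Measure.pi (fun _ : Fin n => ν) (⋂ i ∈ S, (fun ω : Fin n → ℕ × ℕ => ω (e i)) ⁻¹' B i)
      = ∏ i ∈ S, ν (B i) := by
  have hset : (⋂ i ∈ S, (fun ω : Fin n → ℕ × ℕ => ω (e i)) ⁻¹' B i)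
      = Set.pi Set.univ (fun j => if e.symm j ∈ S then B (e.symm j) else Set.univ) := by
    ext ω
    simp only [Set.mem_iInter, Set.mem_preimage, Set.mem_pi, Set.mem_univ, true_implies]
    constructor
    · intro h j
      split_ifs with hj
      · have := h (e.symm j) hj
        rwa [e.apply_symm_apply] at this
      · trivial
    · intro h i hi
      have := h (e i)
      simp only [e.symm_apply_apply, hi, if_true] at this
      exact this
  rw [hset, Measure.pi_pi]
  rw [← Equiv.prod_comp e (fun j => ν (if e.symm j ∈ S then B (e.symm j) else Set.univ))]
  have hfac : ∀ i : V, ν (if e.symm (e i) ∈ S then B (e.symm (e i)) else Set.univ)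
      = if i ∈ S then ν (B i) else 1 := by
    intro i
    rw [e.symm_apply_apply]
    split_ifs <;> simp
  simp_rw [hfac]
  rw [Finset.prod_ite_mem Finset.univ S (fun i => ν (B i)), Finset.univ_inter]

lemma pi_cyl_single {n : ℕ} (ν : Measure (ℕ × ℕ)) [IsProbabilityMeasure ν]
    {V : Type*} [Fintype V] (e : V ≃ Fin n) (i : V) (A : Set (ℕ × ℕ)) :
    Measure.pi (fun _ : Fin n => ν) ((fun ω : Fin n → ℕ × ℕ => ω (e i)) ⁻¹' A) = ν A := by
  have h := pi_cylinder ν e {i} (fun _ => A)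
  simpa using h

/-- **Coupling of Bernoulli and Poisson vertex selections.**
Given a finite graph `G` and `p ∈ [0,1]`, there is a coupling of the random induced subgraph
`X_p` (keep each vertex independently with probability `p`, delete isolated vertices) and the
random multigraph `M_p` (take `Po(p)` copies of each vertex, add induced edges, delete isolated
vertices) such that `P(M_p ≠ X_p ∣ X_p) ≤ 2 p v(X_p)`. -/
theorem stmt2 {V : Type*} [Fintype V] (G : SimpleGraph V) (p : ℝ)
    (hp : p ∈ Set.Icc (0 : ℝ) 1) :
    ∃ (Ω : Type) (_ : MeasurableSpace Ω) (μ : Measure Ω) (_ : IsProbabilityMeasure μ)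
      (I Y : V → Ω → ℕ),
      -- the pairs `(I i, Y i)` are independent over `i ∈ V`
      ProbabilityTheory.iIndepFun
        (fun i ω => (I i ω, Y i ω)) μ ∧
      -- `I i ~ Be(p)`
      (∀ i, μ {ω | I i ω = 1} = ENNReal.ofReal p ∧
            μ {ω | I i ω = 0} = ENNReal.ofReal (1 - p)) ∧
      -- `Y i ~ Po(p)`
      (∀ i k, μ {ω | Y i ω = k}
          = ENNReal.ofReal (p ^ k * Real.exp (-p) / (k.factorial : ℝ))) ∧
      -- conditionally on `X_p` (i.e. on the reduced Bernoulli multiplicity function), the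
      -- probability that `M_p` and `X_p` differ as graphs is at most `2 p v(X_p)`:
      (∀ m : V → ℕ,
        μ ({ω | ¬ Nonempty
              (blowup G (delIso G fun i => Y i ω) ≃g blowup G (delIso G fun i => I i ω))} ∩
            {ω | (delIso G fun i => I i ω) = m})
          ≤ ENNReal.ofReal (2 * p * (∑ i : V, m i)) * μ {ω | (delIso G fun i => I i ω) = m}) := by
  obtain ⟨hp0, hp1⟩ := hp
  set n := Fintype.card V with hn
  set e : V ≃ Fin n := Fintype.equivFin V with he
  set ν : Measure (ℕ × ℕ) := nuM p hp0 hp1 with hν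
  set μ : Measure (Fin n → ℕ × ℕ) := Measure.pi (fun _ => ν) with hμ
  haveI : IsProbabilityMeasure μ := by rw [hμ]; infer_instance
  haveI hMSC : ∀ (W : Finset (Fin n)), MeasurableSingletonClass (↥W → ℕ × ℕ) := fun W =>
    ⟨fun g => by
      have h : {g} = Set.pi Set.univ (fun j => {g j}) := by
        ext h; simp [Set.mem_pi, funext_iff]
      rw [h]; exact MeasurableSet.univ_pi fun j => measurableSet_singleton _⟩
  refine ⟨Fin n → ℕ × ℕ, inferInstance, μ, inferInstance,
    fun i ω => (ω (e i)).1, fun i ω => (ω (e i)).2, ?_, ?_, ?_, ?_⟩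
  · -- independence
    rw [ProbabilityTheory.iIndepFun_iff_measure_inter_preimage_eq_mul]
    intro S sets _
    have hpre : ∀ i : V, (fun ω : Fin n → ℕ × ℕ => ((ω (e i)).1, (ω (e i)).2)) ⁻¹' sets i
        = (fun ω : Fin n → ℕ × ℕ => ω (e i)) ⁻¹' sets i := by
      intro i; ext ω; simp only [Set.mem_preimage, Prod.mk.eta]
    simp only [hpre]
    rw [hμ, pi_cylinder ν e S sets]
    exact Finset.prod_congr rfl fun i _ => (pi_cyl_single ν e i (sets i)).symm
  · -- Bernoulli marginals
    intro i
    constructor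
    · have h : {ω : Fin n → ℕ × ℕ | (ω (e i)).1 = 1}
          = (fun ω : Fin n → ℕ × ℕ => ω (e i)) ⁻¹' {x | x.1 = 1} := rfl
      rw [h, hμ, pi_cyl_single ν e i _, hν, nuM_fst_one hp0 hp1]
    · have h : {ω : Fin n → ℕ × ℕ | (ω (e i)).1 = 0}
          = (fun ω : Fin n → ℕ × ℕ => ω (e i)) ⁻¹' {x | x.1 = 0} := rfl
      rw [h, hμ, pi_cyl_single ν e i _, hν, nuM_fst_zero hp0 hp1]
  · -- Poisson marginals
    intro i k
    have h : {ω : Fin n → ℕ × ℕ | (ω (e i)).2 = k}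
        = (fun ω : Fin n → ℕ × ℕ => ω (e i)) ⁻¹' {x | x.2 = k} := rfl
    rw [h, hμ, pi_cyl_single ν e i _, hν, nuM_snd hp0 hp1 k]
  · -- main estimate
    intro m
    set S : Finset V := Finset.univ.filter (fun i => 0 < m i) with hS
    set Dset : Set (Fin n → ℕ × ℕ) := {ω | (delIso G fun i => (ω (e i)).1) = m} with hDset
    set A : V → Set (Fin n → ℕ × ℕ) :=
      fun i => {ω | (ω (e i)).2 ≠ (ω (e i)).1} ∩ Dset with hA
    set Ebad : V → Set (Fin n → ℕ × ℕ) :=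
      fun i => (fun ω : Fin n → ℕ × ℕ => ω (e i)) ⁻¹' {x | x.1 = 0 ∧ x.2 ≠ 0} with hEb
    have hincl : {ω : Fin n → ℕ × ℕ | ¬ Nonempty
          (blowup G (delIso G fun i => (ω (e i)).2) ≃g blowup G (delIso G fun i => (ω (e i)).1))}
        ∩ Dset ⊆ (⋃ i ∈ S, A i) ∪ (⋃ i : V, Ebad i) := by
      rintro ω ⟨hiso, hD⟩
      by_cases hbad : ∃ i : V, (ω (e i)).1 = 0 ∧ (ω (e i)).2 ≠ 0
      · exact Or.inr (Set.mem_iUnion.2 ⟨hbad.choose, hbad.choose_spec⟩)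
      push_neg at hbad
      by_cases hYI : ∃ i ∈ S, (ω (e i)).2 ≠ (ω (e i)).1
      · obtain ⟨i, hiS, hne⟩ := hYI
        exact Or.inl (Set.mem_biUnion hiS ⟨hne, hD⟩)
      push_neg at hYI
      exfalso
      apply hiso
      have hDm : (delIso G fun i => (ω (e i)).1) = m := hD
      have hcongr : delIso G (fun i => (ω (e i)).2) = delIso G (fun i => (ω (e i)).1) := by
        apply delIso_congr
        · exact hbad
        · intro i hpos
          have hmi : 0 < m i := by rw [← congrFun hDm i]; exact hpos
          exact hYI i (Finset.mem_filter.2 ⟨Finset.mem_univ _, hmi⟩)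
      rw [hcongr]
      exact ⟨SimpleGraph.Iso.refl (G := blowup G (delIso G fun i => (ω (e i)).1))⟩
    have hEbad : μ (⋃ i : V, Ebad i) = 0 :=
      measure_iUnion_null fun i => by
        rw [hEb, hμ, pi_cyl_single ν e i _, hν]; exact nuM_bad hp0 hp1
    have hms : ∀ (W : Finset (Fin n)) (s : Set (↥W → ℕ × ℕ)), MeasurableSet s := fun W s => by
      haveI := hMSC W
      exact s.to_countable.measurableSet
    have hbase : ProbabilityTheory.iIndepFun
        (fun j (ω : Fin n → ℕ × ℕ) => ω j) μ := by
      rw [ProbabilityTheory.iIndepFun_iff_measure_inter_preimage_eq_mul]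
      intro Sf sets _
      have h1 := pi_cylinder ν (Equiv.refl (Fin n)) Sf sets
      simp only [Equiv.refl_apply] at h1
      rw [hμ, h1]
      refine Finset.prod_congr rfl fun j _ => ?_
      have h2 := pi_cyl_single ν (Equiv.refl (Fin n)) j (sets j)
      simp only [Equiv.refl_apply] at h2
      exact h2.symm
    have hterm : ∀ i ∈ S, μ (A i) ≤ ENNReal.ofReal p * μ Dset := by
      intro i hiS
      have hmi : 0 < m i := (Finset.mem_filter.1 hiS).2
      set T : Finset (Fin n) := Finset.univ.erase (e i) with hT
      have hmem : ∀ v : V, v ≠ i → e v ∈ T := fun v hv =>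
        Finset.mem_erase.2 ⟨fun hc => hv (e.injective hc), Finset.mem_univ _⟩
      set Bset : Set (↥T → ℕ × ℕ) :=
        {h | delIso G (fun v => if hv : v = i then m i else (h ⟨e v, hmem v hv⟩).1) = m} with hB
      have hfun : ∀ ω : Fin n → ℕ × ℕ, (ω (e i)).1 = m i →
          (fun v => if hv : v = i then m i else (ω (e v)).1) = (fun v => (ω (e v)).1) := by
        intro ω hω; funext v
        by_cases hv : v = i
        · subst hv; rw [dif_pos rfl, hω]
        · rw [dif_neg hv]
      have hIval : ∀ ω : Fin n → ℕ × ℕ, ω ∈ Dset → (ω (e i)).1 = m i := by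
        intro ω hD
        have hDm : (delIso G fun v => (ω (e v)).1) = m := hD
        rcases delIso_cases G (fun v => (ω (e v)).1) i with h | h
        · rw [← h, congrFun hDm i]
        · exfalso; rw [congrFun hDm i] at h; omega
      have hrest : ∀ ω : Fin n → ℕ × ℕ, (ω (e i)).1 = m i →
          ((fun (j : ↥T) => ω ↑j) ∈ Bset ↔ ω ∈ Dset) := by
        intro ω hω
        rw [hB, Set.mem_setOf_eq]
        have hbeta : (fun v => if hv : v = i then m i
              else (((fun (j : ↥T) => ω ↑j)) ⟨e v, hmem v hv⟩).1)
            = (fun v => if hv : v = i then m i else (ω (e v)).1) := rfl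
        rw [hbeta, hfun ω hω]
        exact Iff.rfl
      set pt : ↥({e i} : Finset (Fin n)) := ⟨e i, Finset.mem_singleton_self _⟩ with hpt
      have hDsplit : Dset =
          (fun (ω : Fin n → ℕ × ℕ) (j : ↥({e i} : Finset (Fin n))) => ω ↑j) ⁻¹'
            {h : ↥({e i} : Finset (Fin n)) → ℕ × ℕ | (h pt).1 = m i}
          ∩ (fun (ω : Fin n → ℕ × ℕ) (j : ↥T) => ω ↑j) ⁻¹' Bset := by
        ext ω
        simp only [Set.mem_inter_iff, Set.mem_preimage, Set.mem_setOf_eq]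
        constructor
        · intro hD
          have hI := hIval ω hD
          exact ⟨hI, (hrest ω hI).2 hD⟩
        · rintro ⟨hI, hBm⟩
          exact (hrest ω hI).1 hBm
      have hAsplit : A i =
          (fun (ω : Fin n → ℕ × ℕ) (j : ↥({e i} : Finset (Fin n))) => ω ↑j) ⁻¹'
            {h : ↥({e i} : Finset (Fin n)) → ℕ × ℕ | (h pt).1 = m i ∧ (h pt).2 ≠ m i}
          ∩ (fun (ω : Fin n → ℕ × ℕ) (j : ↥T) => ω ↑j) ⁻¹' Bset := by
        ext ω
        simp only [hA, Set.mem_inter_iff, Set.mem_preimage, Set.mem_setOf_eq]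
        constructor
        · rintro ⟨hne, hD⟩
          have hI := hIval ω hD
          exact ⟨⟨hI, by rw [← hI]; exact hne⟩, (hrest ω hI).2 hD⟩
        · rintro ⟨⟨hI, hne⟩, hBm⟩
          exact ⟨by rw [hI]; exact hne, (hrest ω hI).1 hBm⟩
      have hdisj : Disjoint ({e i} : Finset (Fin n)) T := by
        rw [Finset.disjoint_singleton_left, hT]
        exact Finset.notMem_erase _ _
      have hind := hbase.indepFun_finset {e i} T hdisj (fun j => measurable_pi_apply j)
      have hmul1 := hind.measure_inter_preimage_eq_mul
        (s := {h : ↥({e i} : Finset (Fin n)) → ℕ × ℕ | (h pt).1 = m i ∧ (h pt).2 ≠ m i})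
        (t := Bset) (hms _ _) (hms _ _)
      have hmul0 := hind.measure_inter_preimage_eq_mul
        (s := {h : ↥({e i} : Finset (Fin n)) → ℕ × ℕ | (h pt).1 = m i})
        (t := Bset) (hms _ _) (hms _ _)
      have hev1 : (fun (ω : Fin n → ℕ × ℕ) (j : ↥({e i} : Finset (Fin n))) => ω ↑j) ⁻¹'
            {h : ↥({e i} : Finset (Fin n)) → ℕ × ℕ | (h pt).1 = m i ∧ (h pt).2 ≠ m i}
          = (fun ω : Fin n → ℕ × ℕ => ω (e i)) ⁻¹' {x | x.1 = m i ∧ x.2 ≠ m i} := rfl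
      have hev0 : (fun (ω : Fin n → ℕ × ℕ) (j : ↥({e i} : Finset (Fin n))) => ω ↑j) ⁻¹'
            {h : ↥({e i} : Finset (Fin n)) → ℕ × ℕ | (h pt).1 = m i}
          = (fun ω : Fin n → ℕ × ℕ => ω (e i)) ⁻¹' {x | x.1 = m i} := rfl
      have hnu1 : μ ((fun ω : Fin n → ℕ × ℕ => ω (e i)) ⁻¹' {x | x.1 = m i ∧ x.2 ≠ m i})
          = ν {x : ℕ × ℕ | x.1 = m i ∧ x.2 ≠ m i} := by
        rw [hμ]; exact pi_cyl_single ν e i _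
      have hnu0 : μ ((fun ω : Fin n → ℕ × ℕ => ω (e i)) ⁻¹' {x | x.1 = m i})
          = ν {x : ℕ × ℕ | x.1 = m i} := by
        rw [hμ]; exact pi_cyl_single ν e i _
      calc μ (A i)
          = ν {x : ℕ × ℕ | x.1 = m i ∧ x.2 ≠ m i}
            * μ ((fun (ω : Fin n → ℕ × ℕ) (j : ↥T) => ω ↑j) ⁻¹' Bset) := by
            rw [hAsplit, hmul1, hev1, hnu1]
        _ ≤ (ENNReal.ofReal p * ν {x : ℕ × ℕ | x.1 = m i})
            * μ ((fun (ω : Fin n → ℕ × ℕ) (j : ↥T) => ω ↑j) ⁻¹' Bset) :=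
            mul_le_mul_left (nuM_ne hp0 hp1 (m i) hmi) _
        _ = ENNReal.ofReal p * μ Dset := by
            rw [mul_assoc, hDsplit, hmul0, hev0, hnu0]
    have hcard : S.card ≤ ∑ i : V, m i := by
      calc S.card = ∑ _i ∈ S, 1 := Finset.card_eq_sum_ones S
        _ ≤ ∑ i ∈ S, m i := Finset.sum_le_sum (fun i hi => (Finset.mem_filter.1 hi).2)
        _ ≤ ∑ i : V, m i := Finset.sum_le_sum_of_subset (Finset.filter_subset _ _)
    have hfinal : (S.card : ℝ≥0∞) * ENNReal.ofReal p
        ≤ ENNReal.ofReal (2 * p * ((∑ i : V, m i : ℕ) : ℝ)) := by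
      rw [← ENNReal.ofReal_natCast S.card, ← ENNReal.ofReal_mul (Nat.cast_nonneg _)]
      apply ENNReal.ofReal_le_ofReal
      have h1 : (S.card : ℝ) ≤ ((∑ i : V, m i : ℕ) : ℝ) := Nat.cast_le.2 hcard
      nlinarith [Nat.cast_nonneg (α := ℝ) (∑ i : V, m i), Nat.cast_nonneg (α := ℝ) S.card]
    calc μ ({ω : Fin n → ℕ × ℕ | ¬ Nonempty
          (blowup G (delIso G fun i => (ω (e i)).2) ≃g blowup G (delIso G fun i => (ω (e i)).1))}
          ∩ Dset)
        ≤ μ ((⋃ i ∈ S, A i) ∪ (⋃ i : V, Ebad i)) := measure_mono hincl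
      _ ≤ μ (⋃ i ∈ S, A i) + μ (⋃ i : V, Ebad i) := measure_union_le _ _
      _ = μ (⋃ i ∈ S, A i) := by rw [hEbad, add_zero]
      _ ≤ ∑ i ∈ S, μ (A i) := measure_biUnion_finset_le S A
      _ ≤ ∑ _i ∈ S, ENNReal.ofReal p * μ Dset := Finset.sum_le_sum hterm
      _ = (S.card : ℝ≥0∞) * (ENNReal.ofReal p * μ Dset) := by
          rw [Finset.sum_const, nsmul_eq_mul]
      _ = ((S.card : ℝ≥0∞) * ENNReal.ofReal p) * μ Dset := by rw [mul_assoc]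
      _ ≤ ENNReal.ofReal (2 * p * ((∑ i : V, m i : ℕ) : ℝ)) * μ Dset :=
          mul_le_mul_left hfinal _
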